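/- Let p > q ≥ 1 be coprime integers, and suppose p/q = [a_1,…,a_n] and p/(p−q) = [b_1,…,b_m] with all a_i ≥ 2 and all b_j ≥ 2. Then m = (a_1 + ⋯ + a_n) − 2n + 1, and (b_1 + ⋯ + b_m) − m = (a_1 + ⋯ + a_n) − n. -/

import Mathlib

/-- Hirzebruch–Jung continued fraction `[x₁,…,x_r] = x₁ − 1/(x₂ − 1/(⋯ − 1/x_r))`. -/
def hjCF : List ℤ → ℚ
  | [] => 0
  | a :: l => (a : ℚ) - 1 / hjCF l

lemma hjCF_cons (a : ℤ) (l : List ℤ) : hjCF (a :: l) = (a : ℚ) - 1 / hjCF l := rfl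

lemma hjCF_gt_one : ∀ l : List ℤ, l ≠ [] → (∀ x ∈ l, 2 ≤ x) → 1 < hjCF l
  | [], h, _ => absurd rfl h
  | a :: l, _, h2 => by
    have ha : (2 : ℚ) ≤ (a : ℚ) := by exact_mod_cast h2 a List.mem_cons_self
    rcases eq_or_ne l [] with rfl | hl
    · simp [hjCF]; linarith
    · have ht := hjCF_gt_one l hl (fun x hx => h2 x (List.mem_cons_of_mem a hx))
      have h1 : 1 / hjCF l < 1 := by
        rw [div_lt_one (by linarith)]; linarith
      have h0 : 0 < 1 / hjCF l := one_div_pos.mpr (by linarith)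
      rw [hjCF_cons]; linarith

lemma hjCF_le_head (a : ℤ) (l : List ℤ) (h2 : ∀ x ∈ l, 2 ≤ x) : hjCF (a :: l) ≤ a := by
  rcases eq_or_ne l [] with rfl | hl
  · simp [hjCF]
  · have ht := hjCF_gt_one l hl h2
    have h0 : 0 < 1 / hjCF l := one_div_pos.mpr (by linarith)
    rw [hjCF_cons]; linarith

lemma hjCF_gt_head_sub (a : ℤ) (l : List ℤ) (h2 : ∀ x ∈ l, 2 ≤ x) :
    (a : ℚ) - 1 < hjCF (a :: l) := by
  rcases eq_or_ne l [] with rfl | hl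
  · simp [hjCF]
  · have ht := hjCF_gt_one l hl h2
    have h1 : 1 / hjCF l < 1 := by rw [div_lt_one (by linarith)]; linarith
    rw [hjCF_cons]; linarith

lemma hjCF_key : ∀ N : ℕ, ∀ A B : List ℤ, A.length + B.length ≤ N → A ≠ [] → B ≠ [] →
    (∀ x ∈ A, 2 ≤ x) → (∀ x ∈ B, 2 ≤ x) → 1 / hjCF A + 1 / hjCF B = 1 →
    ((B.length : ℤ) = A.sum - 2 * A.length + 1 ∧
      (A.sum : ℤ) - A.length = B.sum - B.length) := by
  intro N
  induction N with
  | zero =>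
    intro A B hlen hA hB _ _ _
    exfalso
    rcases A with _ | ⟨a, A'⟩
    · exact hA rfl
    · simp at hlen
  | succ N ih =>
    rintro (_ | ⟨a, A'⟩) (_ | ⟨b, B'⟩) hlen hA hB h2A h2B heq
    · exact absurd rfl hA
    · exact absurd rfl hA
    · exact absurd rfl hB
    set x := hjCF (a :: A') with hxdef
    set y := hjCF (b :: B') with hydef
    have h2A' : ∀ z ∈ A', 2 ≤ z := fun z hz => h2A z (List.mem_cons_of_mem a hz)
    have h2B' : ∀ z ∈ B', 2 ≤ z := fun z hz => h2B z (List.mem_cons_of_mem b hz)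
    have ha2 : (2 : ℚ) ≤ (a : ℚ) := by exact_mod_cast h2A a List.mem_cons_self
    have hb2 : (2 : ℚ) ≤ (b : ℚ) := by exact_mod_cast h2B b List.mem_cons_self
    have hx1 : 1 < x := hjCF_gt_one _ (by simp) h2A
    have hy1 : 1 < y := hjCF_gt_one _ (by simp) h2B
    have hxy : x + y = x * y := by
      field_simp at heq; linarith
    rcases lt_trichotomy x 2 with hx2 | hx2 | hx2
    · -- x < 2 : a = 2, A' ≠ [], y > 2, b ≥ 3, recurse on (A', (b-1)::B')
      have hA' : A' ≠ [] := by
        intro h; subst h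
        have : x = (a : ℚ) := by simp [hxdef, hjCF]
        linarith
      have htA : 1 < hjCF A' := hjCF_gt_one A' hA' h2A'
      have ha3 : (a : ℚ) - 1 < x := hjCF_gt_head_sub a A' h2A'
      have haeq : a = 2 := by
        have : (a : ℚ) < 3 := by linarith
        have h1 : a < 3 := by exact_mod_cast this
        have h2 : 2 ≤ a := h2A a List.mem_cons_self
        omega
      have hy2 : 2 < y := by nlinarith [mul_pos (sub_pos.mpr hx1) (sub_pos.mpr hy1)]
      have hyb : y ≤ (b : ℚ) := hjCF_le_head b B' h2B'
      have hb3 : 3 ≤ b := by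
        have : (2 : ℚ) < (b : ℚ) := lt_of_lt_of_le hy2 hyb
        have : 2 < b := by exact_mod_cast this
        omega
      have hxA' : x = 2 - 1 / hjCF A' := by
        rw [hxdef, hjCF_cons, haeq]; norm_num
      have hnewB : hjCF ((b - 1) :: B') = y - 1 := by
        rw [hjCF_cons, hydef, hjCF_cons]; push_cast; ring
      have hneweq : 1 / hjCF A' + 1 / hjCF ((b - 1) :: B') = 1 := by
        rw [hnewB]
        have h1 : 1 / hjCF A' = 2 - x := by rw [hxA']; ring
        have h2 : 1 / (y - 1) = x - 1 := by
          rw [div_eq_iff (by linarith : y - (1:ℚ) ≠ 0)]; nlinarith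
        rw [h1, h2]; ring
      obtain ⟨c1, c2⟩ := ih A' ((b - 1) :: B')
        (by simp at hlen ⊢; omega) hA' (by simp)
        h2A' (by intro z hz; rcases List.mem_cons.mp hz with rfl | hz; exacts [by omega, h2B' z hz]) hneweq
      simp only [List.length_cons, List.sum_cons] at c1 c2 ⊢
      constructor
      · push_cast at c1 ⊢; rw [haeq]; push_cast; linarith
      · push_cast at c2 ⊢; rw [haeq]; push_cast; linarith
    · -- x = 2 : A' = [], a = 2, y = 2, B' = [], b = 2
      have hy2 : y = 2 := by nlinarith
      have hA' : A' = [] := by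
        by_contra hA'
        have htA := hjCF_gt_one A' hA' h2A'
        have ha3 : (a : ℚ) - 1 < x := hjCF_gt_head_sub a A' h2A'
        have hxa : x < (a : ℚ) := by
          have h0 : 0 < 1 / hjCF A' := one_div_pos.mpr (by linarith)
          rw [hxdef, hjCF_cons]; linarith
        have : (a : ℚ) < 3 := by linarith
        have : (a : ℚ) ≤ 2 := by
          have h1 : a < 3 := by exact_mod_cast this
          exact_mod_cast (by omega : a ≤ 2)
        linarith
      have hB' : B' = [] := by
        by_contra hB'
        have htB := hjCF_gt_one B' hB' h2B'
        have hb3 : (b : ℚ) - 1 < y := hjCF_gt_head_sub b B' h2B'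
        have hyb : y < (b : ℚ) := by
          have h0 : 0 < 1 / hjCF B' := one_div_pos.mpr (by linarith)
          rw [hydef, hjCF_cons]; linarith
        have : (b : ℚ) < 3 := by linarith
        have : (b : ℚ) ≤ 2 := by
          have h1 : b < 3 := by exact_mod_cast this
          exact_mod_cast (by omega : b ≤ 2)
        linarith
      subst hA'; subst hB'
      have hax : x = (a : ℚ) := by simp [hxdef, hjCF]
      have hbx : y = (b : ℚ) := by simp [hydef, hjCF]
      have ha2' : a = 2 := by exact_mod_cast hax.symm.trans hx2
      have hb2' : b = 2 := by exact_mod_cast (hbx.symm.trans hy2 : (b:ℚ) = 2)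
      subst ha2'; subst hb2'
      norm_num
    · -- x > 2 : y < 2, b = 2, B' ≠ [], a ≥ 3, recurse on ((a-1)::A', B')
      have hy2 : y < 2 := by nlinarith [mul_pos (sub_pos.mpr hx1) (sub_pos.mpr hy1)]
      have hB' : B' ≠ [] := by
        intro h; subst h
        have : y = (b : ℚ) := by simp [hydef, hjCF]
        linarith
      have htB : 1 < hjCF B' := hjCF_gt_one B' hB' h2B'
      have hb3 : (b : ℚ) - 1 < y := hjCF_gt_head_sub b B' h2B'
      have hbeq : b = 2 := by
        have : (b : ℚ) < 3 := by linarith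
        have h1 : b < 3 := by exact_mod_cast this
        have h2 : 2 ≤ b := h2B b List.mem_cons_self
        omega
      have hxa : x ≤ (a : ℚ) := hjCF_le_head a A' h2A'
      have ha3 : 3 ≤ a := by
        have : (2 : ℚ) < (a : ℚ) := lt_of_lt_of_le hx2 hxa
        have : 2 < a := by exact_mod_cast this
        omega
      have hyB' : y = 2 - 1 / hjCF B' := by
        rw [hydef, hjCF_cons, hbeq]; norm_num
      have hnewA : hjCF ((a - 1) :: A') = x - 1 := by
        rw [hjCF_cons, hxdef, hjCF_cons]; push_cast; ring
      have hneweq : 1 / hjCF ((a - 1) :: A') + 1 / hjCF B' = 1 := by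
        rw [hnewA]
        have h1 : 1 / hjCF B' = 2 - y := by rw [hyB']; ring
        have h2 : 1 / (x - 1) = y - 1 := by
          rw [div_eq_iff (by linarith : x - (1:ℚ) ≠ 0)]; nlinarith
        rw [h1, h2]; ring
      obtain ⟨c1, c2⟩ := ih ((a - 1) :: A') B'
        (by simp at hlen ⊢; omega) (by simp) hB'
        (by intro z hz; rcases List.mem_cons.mp hz with rfl | hz; exacts [by omega, h2A' z hz]) h2B' hneweq
      simp only [List.length_cons, List.sum_cons] at c1 c2 ⊢
      constructor
      · push_cast at c1 ⊢; linarith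
      · rw [hbeq]; push_cast at c2 ⊢; linarith

theorem stmt11 (p q : ℕ) (hq : 1 ≤ q) (hqp : q < p) (hpq : Nat.Coprime p q)
    (n m : ℕ) (hn : 1 ≤ n) (hm : 1 ≤ m)
    (a b : ℕ → ℤ) (ha : ∀ i < n, 2 ≤ a i) (hb : ∀ i < m, 2 ≤ b i)
    (hav : (p : ℚ) / q = hjCF ((List.range n).map fun i => a i))
    (hbv : (p : ℚ) / ((p : ℚ) - q) = hjCF ((List.range m).map fun i => b i)) :
    (m : ℤ) = ((List.range n).map fun i => a i).sum - 2 * n + 1 ∧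
      ((List.range m).map fun i => b i).sum - m =
        ((List.range n).map fun i => a i).sum - n := by
  set A := (List.range n).map fun i => a i with hA
  set B := (List.range m).map fun i => b i with hB
  have hAne : A ≠ [] := by
    rw [hA]; simp; omega
  have hBne : B ≠ [] := by
    rw [hB]; simp; omega
  have h2A : ∀ x ∈ A, 2 ≤ x := by
    intro x hx
    rw [hA] at hx
    simp only [List.mem_map, List.mem_range] at hx
    obtain ⟨i, hi, rfl⟩ := hx
    exact ha i hi
  have h2B : ∀ x ∈ B, 2 ≤ x := by
    intro x hx
    rw [hB] at hx
    simp only [List.mem_map, List.mem_range] at hx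
    obtain ⟨i, hi, rfl⟩ := hx
    exact hb i hi
  have hp0 : (p : ℚ) ≠ 0 := by
    simp only [ne_eq, Nat.cast_eq_zero]; omega
  have heq : 1 / hjCF A + 1 / hjCF B = 1 := by
    rw [← hav, ← hbv, one_div_div, one_div_div, ← add_div,
      show (q : ℚ) + ((p : ℚ) - q) = p by ring, div_self hp0]
  obtain ⟨c1, c2⟩ := hjCF_key (A.length + B.length) A B le_rfl hAne hBne h2A h2B heq
  have hAlen : A.length = n := by rw [hA]; simp
  have hBlen : B.length = m := by rw [hB]; simp
  rw [hAlen, hBlen] at c1 c2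
  exact ⟨c1, by linarith⟩
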